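/- For every natural number $k$, the partially ordered set $P_k = \{t \in [0,1]^{2^{\{1,\dots,k\}}} : \sum_{a \subseteq \{1,\dots,k\}} t_a = 1\}$, ordered by $t \leq s$ iff $\sum_{a \in \mathcal{A}} t_a \leq \sum_{a \in \mathcal{A}} s_a$ for every upwards closed family $\mathcal{A}$ of subsets of $\{1,\dots,k\}$, is irreducible: whenever $P_k$ is order-isomorphic to a product $Q \times R$ of partially ordered sets, either $Q$ or $R$ is a singleton. -/

import Mathlib

/-- The underlying set of `P_k`: functions on subsets of `{1,…,k}` with values
in `[0,1]` summing to `1`. -/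
def PkSet (k : ℕ) : Set (Finset (Fin k) → ℝ) :=
  {t | (∀ a, t a ∈ Set.Icc (0 : ℝ) 1) ∧ (∑ a : Finset (Fin k), t a) = 1}

/-- A family of subsets of `{1,…,k}` is upwards closed. -/
def UpClosed {k : ℕ} (𝒜 : Finset (Finset (Fin k))) : Prop :=
  ∀ a ∈ 𝒜, ∀ b : Finset (Fin k), a ⊆ b → b ∈ 𝒜

/-- The order on `P_k`: `t ≤ s` iff the `t`-mass of every upwards closed
family is at most its `s`-mass. -/
def PkLe {k : ℕ} (t s : ↥(PkSet k)) : Prop :=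
  ∀ 𝒜 : Finset (Finset (Fin k)), UpClosed 𝒜 →
    (∑ a ∈ 𝒜, t.1 a) ≤ ∑ a ∈ 𝒜, s.1 a

section Aux

variable {k : ℕ}

/-- A "two-point" distribution: mass `1-ε` at `∅` and mass `ε` at `c`. -/
def twoF (c : Finset (Fin k)) (ε : ℝ) : Finset (Fin k) → ℝ :=
  fun a => (if a = ∅ then 1 - ε else 0) + (if a = c then ε else 0)

lemma sum_twoF (c : Finset (Fin k)) (ε : ℝ) (A : Finset (Finset (Fin k))) :
    ∑ a ∈ A, twoF c ε a
      = (if ∅ ∈ A then 1 - ε else 0) + (if c ∈ A then ε else 0) := by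
  simp [twoF, Finset.sum_add_distrib, Finset.sum_ite_eq']

lemma twoF_mem (c : Finset (Fin k)) {ε : ℝ} (h0 : 0 ≤ ε) (h1 : ε ≤ 1) :
    twoF c ε ∈ PkSet k := by
  constructor
  · intro a
    simp only [twoF, Set.mem_Icc]
    rcases eq_or_ne a ∅ with rfl | ha
    · rcases eq_or_ne (∅ : Finset (Fin k)) c with rfl | hc
      · simp only [if_pos rfl, if_true]
        constructor <;> linarith
      · simp only [if_pos rfl, if_neg hc, if_true, add_zero]
        constructor <;> linarith
    · rcases eq_or_ne a c with rfl | hc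
      · simp only [if_neg ha, if_pos rfl, if_true, zero_add]
        constructor <;> linarith
      · simp [ha, hc]
  · have : (∑ a : Finset (Fin k), twoF c ε a)
        = (if ∅ ∈ (Finset.univ : Finset (Finset (Fin k))) then 1 - ε else 0)
          + (if c ∈ (Finset.univ : Finset (Finset (Fin k))) then ε else 0) :=
      sum_twoF c ε Finset.univ
    simpa using this

lemma sum_nonneg' {x : Finset (Fin k) → ℝ} (hx : x ∈ PkSet k)
    (A : Finset (Finset (Fin k))) : 0 ≤ ∑ a ∈ A, x a :=
  Finset.sum_nonneg fun a _ => (hx.1 a).1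

lemma sum_le_one' {x : Finset (Fin k) → ℝ} (hx : x ∈ PkSet k)
    (A : Finset (Finset (Fin k))) : ∑ a ∈ A, x a ≤ 1 := by
  calc ∑ a ∈ A, x a ≤ ∑ a : Finset (Fin k), x a :=
        Finset.sum_le_sum_of_subset_of_nonneg (Finset.subset_univ A)
          (fun a _ _ => (hx.1 a).1)
    _ = 1 := hx.2

lemma up_all {A : Finset (Finset (Fin k))} (hA : UpClosed A) (h : ∅ ∈ A) :
    ∀ b, b ∈ A := fun b => hA ∅ h b (Finset.empty_subset b)

lemma up_univ {A : Finset (Finset (Fin k))} (hA : UpClosed A) (h : ∅ ∈ A) :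
    A = Finset.univ := Finset.eq_univ_iff_forall.mpr (up_all hA h)

/-- `δ_∅` is the bottom element. -/
lemma bot_le' (x : ↥(PkSet k)) :
    PkLe ⟨twoF ∅ 1, twoF_mem ∅ zero_le_one le_rfl⟩ x := by
  intro A hA
  rw [show (⟨twoF ∅ 1, twoF_mem ∅ zero_le_one le_rfl⟩ : ↥(PkSet k)).1 = twoF ∅ 1
      from rfl, sum_twoF]
  by_cases h : ∅ ∈ A
  · rw [up_univ hA h]
    have := x.2.2
    simp [h, this]
  · simpa [h] using sum_nonneg' x.2 A

/-- `δ_univ` is the top element. -/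
lemma le_top' (x : ↥(PkSet k)) :
    PkLe x ⟨twoF Finset.univ 1, twoF_mem Finset.univ zero_le_one le_rfl⟩ := by
  intro A hA
  rw [show (⟨twoF Finset.univ 1, twoF_mem Finset.univ zero_le_one le_rfl⟩ :
      ↥(PkSet k)).1 = twoF Finset.univ 1 from rfl, sum_twoF]
  by_cases h : Finset.univ ∈ A
  · have h1 := sum_le_one' x.2 A
    have h2 : (if ∅ ∈ A then 1-(1:ℝ) else 0) + (if Finset.univ ∈ A then (1:ℝ) else 0) = 1 := by
      simp [h]
    rw [h2]; exact h1
  · have hAe : A = ∅ := by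
      rw [Finset.eq_empty_iff_forall_notMem]
      intro a ha
      exact h (hA a ha Finset.univ (Finset.subset_univ a))
    simp [hAe]

lemma PkLe_trans {x y z : ↥(PkSet k)} (h1 : PkLe x y) (h2 : PkLe y z) :
    PkLe x z := fun A hA => le_trans (h1 A hA) (h2 A hA)

lemma twoF_mono (c : Finset (Fin k)) {ε δ : ℝ}
    (hε0 : 0 ≤ ε) (hδ1 : δ ≤ 1) (hεδ : ε ≤ δ) :
    PkLe ⟨twoF c ε, twoF_mem c hε0 (le_trans hεδ hδ1)⟩
      ⟨twoF c δ, twoF_mem c (le_trans hε0 hεδ) hδ1⟩ := by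
  intro A hA
  rw [show (⟨twoF c ε, twoF_mem c hε0 (le_trans hεδ hδ1)⟩ : ↥(PkSet k)).1
      = twoF c ε from rfl,
    show (⟨twoF c δ, twoF_mem c (le_trans hε0 hεδ) hδ1⟩ : ↥(PkSet k)).1
      = twoF c δ from rfl, sum_twoF, sum_twoF]
  by_cases h : ∅ ∈ A
  · have hc : c ∈ A := up_all hA h c
    simp [h, hc]
  · by_cases hc : c ∈ A <;> simp [h, hc, hεδ]

/-- Fact (A): every element other than `δ_∅` dominates some small two-point
element `twoF {i} ε`. -/
lemma exists_Y_le (x : ↥(PkSet k)) (hx : x.1 ≠ twoF ∅ 1) :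
    ∃ (i : Fin k) (ε : ℝ), 0 < ε ∧ ε ≤ 1/2 ∧
      ∀ (p : twoF {i} ε ∈ PkSet k), PkLe ⟨twoF {i} ε, p⟩ x := by
  have hex : ∃ a, a ≠ ∅ ∧ 0 < x.1 a := by
    by_contra hcon
    push_neg at hcon
    apply hx
    funext a
    rcases eq_or_ne a ∅ with rfl | ha
    · have hs := x.2.2
      have : (∑ b : Finset (Fin k), x.1 b) = x.1 ∅ := by
        apply Finset.sum_eq_single
        · intro b _ hb
          exact le_antisymm (hcon b (Finset.nonempty_iff_ne_empty.mpr hb)) (x.2.1 b).1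
        · intro h; exact absurd (Finset.mem_univ _) h
      rw [this] at hs
      simp [twoF, hs]
    · have := le_antisymm (hcon a (Finset.nonempty_iff_ne_empty.mpr ha)) (x.2.1 a).1
      simp [twoF, ha, this]
  obtain ⟨a, ha, hpos⟩ := hex
  obtain ⟨i, hi⟩ := Finset.nonempty_iff_ne_empty.mpr ha
  refine ⟨i, min (x.1 a) (1/2), lt_min hpos (by norm_num), min_le_right _ _, ?_⟩
  intro p A hA
  rw [show (⟨twoF {i} (min (x.1 a) (1/2)), p⟩ : ↥(PkSet k)).1
      = twoF {i} (min (x.1 a) (1/2)) from rfl, sum_twoF]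
  by_cases h : ∅ ∈ A
  · rw [up_univ hA h]
    have hiA : ({i} : Finset (Fin k)) ∈ (Finset.univ : Finset (Finset (Fin k))) :=
      Finset.mem_univ _
    have := x.2.2
    simp [this]
  · by_cases hiA : ({i} : Finset (Fin k)) ∈ A
    · have haA : a ∈ A := hA {i} hiA a (Finset.singleton_subset_iff.mpr hi)
      have h1 : x.1 a ≤ ∑ b ∈ A, x.1 b :=
        Finset.single_le_sum (fun b _ => (x.2.1 b).1) haA
      simp only [h, hiA, if_true, if_false, zero_add]
      exact le_trans (min_le_left _ _) h1
    · simpa [h, hiA] using sum_nonneg' x.2 A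

/-- The principal filter of `b` among subsets of `{1,…,k}`. -/
def FF (b : Finset (Fin k)) : Finset (Finset (Fin k)) :=
  Finset.univ.filter (fun c => b ⊆ c)

lemma mem_FF {b c : Finset (Fin k)} : c ∈ FF b ↔ b ⊆ c := by simp [FF]

lemma up_FF (b : Finset (Fin k)) : UpClosed (FF b) :=
  fun a ha c hc => mem_FF.mpr ((mem_FF.mp ha).trans hc)

lemma up_union {A B : Finset (Finset (Fin k))} (hA : UpClosed A)
    (hB : UpClosed B) : UpClosed (A ∪ B) := by
  intro a ha c hc
  rcases Finset.mem_union.mp ha with h | h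
  · exact Finset.mem_union.mpr (Or.inl (hA a h c hc))
  · exact Finset.mem_union.mpr (Or.inr (hB a h c hc))

lemma up_inter {A B : Finset (Finset (Fin k))} (hA : UpClosed A)
    (hB : UpClosed B) : UpClosed (A ∩ B) := by
  intro a ha c hc
  exact Finset.mem_inter.mpr ⟨hA a (Finset.mem_inter.mp ha).1 c hc,
    hB a (Finset.mem_inter.mp ha).2 c hc⟩

/-- Fact (B): for `i ≠ j`, the pair `twoF {i} ε`, `twoF {j} δ` has no least
upper bound in `P_k`. -/
lemma no_lub {i j : Fin k} (hij : i ≠ j) {ε δ : ℝ}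
    (hε0 : 0 < ε) (hε1 : ε ≤ 1/2) (hδ0 : 0 < δ) (hδ1 : δ ≤ 1/2)
    (yi yj z : ↥(PkSet k))
    (hyi : yi.1 = twoF {i} ε) (hyj : yj.1 = twoF {j} δ)
    (hzi : PkLe yi z) (hzj : PkLe yj z)
    (hmin : ∀ w, PkLe yi w → PkLe yj w → PkLe z w) : False := by
  have hij' : ({i} : Finset (Fin k)) ≠ {j} := by
    simpa using hij
  have hine : ({i} : Finset (Fin k)) ≠ ∅ := Finset.singleton_ne_empty i
  have hjne : ({j} : Finset (Fin k)) ≠ ∅ := Finset.singleton_ne_empty j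
  set m := max ε δ with hm
  have hm0 : (0:ℝ) ≤ m := le_trans hε0.le (le_max_left _ _)
  have hm1 : m ≤ 1 := max_le (by linarith) (by linarith)
  -- first upper bound: mass m at {i,j}
  set z1 : ↥(PkSet k) := ⟨twoF {i, j} m, twoF_mem _ hm0 hm1⟩ with hz1def
  -- second upper bound: mass ε at {i} and δ at {j}
  have hij2 : ({j} : Finset (Fin k)) ≠ {i} := Ne.symm hij'
  set g : Finset (Fin k) → ℝ := fun a =>
    (if a = ∅ then 1 - ε - δ else 0) + (if a = {i} then ε else 0)
      + (if a = {j} then δ else 0) with hg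
  have hgsum : ∀ A : Finset (Finset (Fin k)), ∑ a ∈ A, g a
      = (if ∅ ∈ A then 1 - ε - δ else 0) + (if ({i} : Finset (Fin k)) ∈ A then ε else 0)
        + (if ({j} : Finset (Fin k)) ∈ A then δ else 0) := by
    intro A
    simp [hg, Finset.sum_add_distrib, Finset.sum_ite_eq']
  have hgmem : g ∈ PkSet k := by
    constructor
    · intro a
      simp only [hg, Set.mem_Icc]
      rcases eq_or_ne a ∅ with rfl | h0
      · simp [Ne.symm hine, Ne.symm hjne]; constructor <;> linarith
      · rcases eq_or_ne a {i} with rfl | h1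
        · simp [hine, hij']; constructor <;> linarith
        · rcases eq_or_ne a {j} with rfl | h2
          · simp [hjne, hij2]; constructor <;> linarith
          · simp [h0, h1, h2]
    · have := hgsum Finset.univ
      simp only [Finset.mem_univ, if_true] at this
      rw [this]; ring
  set z2 : ↥(PkSet k) := ⟨g, hgmem⟩ with hz2def
  -- z1 is an upper bound
  have hub1i : PkLe yi z1 := by
    intro A hA
    rw [hyi, show z1.1 = twoF {i,j} m from rfl, sum_twoF, sum_twoF]
    by_cases h : ∅ ∈ A
    · simp only [h, if_true, up_all hA h]; linarith
    · by_cases hiA : ({i} : Finset (Fin k)) ∈ A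
      · have : ({i, j} : Finset (Fin k)) ∈ A := by
          apply hA {i} hiA
          simp
        simp only [h, if_false, this, if_true, hiA, zero_add]
        exact le_max_left _ _
      · have : (0:ℝ) ≤ if ({i,j} : Finset (Fin k)) ∈ A then m else 0 := by
          split <;> [exact hm0; exact le_rfl]
        simpa [h, hiA] using this
  have hub1j : PkLe yj z1 := by
    intro A hA
    rw [hyj, show z1.1 = twoF {i,j} m from rfl, sum_twoF, sum_twoF]
    by_cases h : ∅ ∈ A
    · simp only [h, if_true, up_all hA h]; linarith
    · by_cases hjA : ({j} : Finset (Fin k)) ∈ A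
      · have : ({i, j} : Finset (Fin k)) ∈ A := by
          apply hA {j} hjA
          simp
        simp only [h, if_false, this, if_true, hjA, zero_add]
        exact le_max_right _ _
      · have : (0:ℝ) ≤ if ({i,j} : Finset (Fin k)) ∈ A then m else 0 := by
          split <;> [exact hm0; exact le_rfl]
        simpa [h, hjA] using this
  -- z2 is an upper bound
  have hub2i : PkLe yi z2 := by
    intro A hA
    rw [hyi, show z2.1 = g from rfl, sum_twoF, hgsum]
    by_cases h : ∅ ∈ A
    · simp only [h, if_true, up_all hA h]; linarith
    · by_cases hiA : ({i} : Finset (Fin k)) ∈ A <;>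
        by_cases hjA : ({j} : Finset (Fin k)) ∈ A <;>
        simp [h, hiA, hjA] <;> linarith
  have hub2j : PkLe yj z2 := by
    intro A hA
    rw [hyj, show z2.1 = g from rfl, sum_twoF, hgsum]
    by_cases h : ∅ ∈ A
    · simp only [h, if_true, up_all hA h]; linarith
    · by_cases hiA : ({i} : Finset (Fin k)) ∈ A <;>
        by_cases hjA : ({j} : Finset (Fin k)) ∈ A <;>
        simp [h, hiA, hjA] <;> linarith
  -- membership facts for the filters
  have hFii : ({i} : Finset (Fin k)) ∈ FF ({i} : Finset (Fin k)) :=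
    mem_FF.mpr subset_rfl
  have hFjj : ({j} : Finset (Fin k)) ∈ FF ({j} : Finset (Fin k)) :=
    mem_FF.mpr subset_rfl
  have hFie : (∅ : Finset (Fin k)) ∉ FF ({i} : Finset (Fin k)) := by
    intro h
    exact hine (Finset.subset_empty.mp (mem_FF.mp h))
  have hFje : (∅ : Finset (Fin k)) ∉ FF ({j} : Finset (Fin k)) := by
    intro h
    exact hjne (Finset.subset_empty.mp (mem_FF.mp h))
  have hFij : ({j} : Finset (Fin k)) ∉ FF ({i} : Finset (Fin k)) := by
    intro h
    have := mem_FF.mp h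
    rw [Finset.singleton_subset_iff, Finset.mem_singleton] at this
    exact hij this
  have hFji : ({i} : Finset (Fin k)) ∉ FF ({j} : Finset (Fin k)) := by
    intro h
    have := mem_FF.mp h
    rw [Finset.singleton_subset_iff, Finset.mem_singleton] at this
    exact hij this.symm
  -- lower bounds on the mass of z on the two filters
  have h1 := hzi (FF {i}) (up_FF _)
  rw [hyi, sum_twoF] at h1
  simp only [hFie, if_false, hFii, if_true, zero_add] at h1
  have h2 := hzj (FF {j}) (up_FF _)
  rw [hyj, sum_twoF] at h2
  simp only [hFje, if_false, hFjj, if_true, zero_add] at h2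
  -- upper bound on the intersection, via z2
  have h3 := hmin z2 hub2i hub2j (FF {i} ∩ FF {j}) (up_inter (up_FF _) (up_FF _))
  rw [show z2.1 = g from rfl, hgsum] at h3
  have hie : (∅ : Finset (Fin k)) ∉ FF ({i} : Finset (Fin k)) ∩ FF {j} := by
    intro h; exact hFie (Finset.mem_inter.mp h).1
  have hii : ({i} : Finset (Fin k)) ∉ FF ({i} : Finset (Fin k)) ∩ FF {j} := by
    intro h; exact hFji (Finset.mem_inter.mp h).2
  have hjj : ({j} : Finset (Fin k)) ∉ FF ({i} : Finset (Fin k)) ∩ FF {j} := by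
    intro h; exact hFij (Finset.mem_inter.mp h).1
  simp only [hie, hii, hjj, if_false, add_zero, zero_add] at h3
  -- upper bound on the union, via z1
  have h4 := hmin z1 hub1i hub1j (FF {i} ∪ FF {j}) (up_union (up_FF _) (up_FF _))
  rw [show z1.1 = twoF {i,j} m from rfl, sum_twoF] at h4
  have hue : (∅ : Finset (Fin k)) ∉ FF ({i} : Finset (Fin k)) ∪ FF {j} := by
    intro h
    rcases Finset.mem_union.mp h with h | h
    · exact hFie h
    · exact hFje h
  have huij : ({i, j} : Finset (Fin k)) ∈ FF ({i} : Finset (Fin k)) ∪ FF {j} := by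
    apply Finset.mem_union.mpr (Or.inl _)
    rw [mem_FF]
    simp
  simp only [hue, huij, if_false, if_true, zero_add] at h4
  -- inclusion-exclusion
  have h5 : (∑ a ∈ FF ({i} : Finset (Fin k)) ∪ FF {j}, z.1 a)
      + ∑ a ∈ FF ({i} : Finset (Fin k)) ∩ FF {j}, z.1 a
      = (∑ a ∈ FF ({i} : Finset (Fin k)), z.1 a) + ∑ a ∈ FF ({j} : Finset (Fin k)), z.1 a :=
    Finset.sum_union_inter
  have h6 : 0 ≤ ∑ a ∈ FF ({i} : Finset (Fin k)) ∩ FF {j}, z.1 a :=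
    sum_nonneg' z.2 _
  have hmax : m < ε + δ := by
    rcases le_total ε δ with h | h
    · rw [hm, max_eq_right h]; linarith
    · rw [hm, max_eq_left h]; linarith
  linarith

end Aux

theorem stmt4 (k : ℕ) {Q R : Type*} [PartialOrder Q] [PartialOrder R]
    (e : ↥(PkSet k) ≃ Q × R) (he : ∀ t s : ↥(PkSet k), PkLe t s ↔ e t ≤ e s) :
    Subsingleton Q ∨ Subsingleton R := by
  rcases subsingleton_or_nontrivial Q with hQ | hQ
  · exact Or.inl hQ
  rcases subsingleton_or_nontrivial R with hR | hR
  · exact Or.inr hR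
  exfalso
  set bot : ↥(PkSet k) := ⟨twoF ∅ 1, twoF_mem ∅ zero_le_one le_rfl⟩ with hbotdef
  set top : ↥(PkSet k) :=
    ⟨twoF Finset.univ 1, twoF_mem Finset.univ zero_le_one le_rfl⟩ with htopdef
  have hbot : ∀ x, e bot ≤ e x := fun x => (he bot x).mp (bot_le' x)
  have htop : ∀ x, e x ≤ e top := fun x => (he x top).mp (le_top' x)
  have hq0 : ∀ q : Q, (e bot).1 ≤ q := by
    intro q
    have h := hbot (e.symm (q, (e bot).2))
    rw [Equiv.apply_symm_apply] at h
    exact h.1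
  have hr0 : ∀ r : R, (e bot).2 ≤ r := by
    intro r
    have h := hbot (e.symm ((e bot).1, r))
    rw [Equiv.apply_symm_apply] at h
    exact h.2
  have hq1 : ∀ q : Q, q ≤ (e top).1 := by
    intro q
    have h := htop (e.symm (q, (e top).2))
    rw [Equiv.apply_symm_apply] at h
    exact h.1
  have hr1 : ∀ r : R, r ≤ (e top).2 := by
    intro r
    have h := htop (e.symm ((e top).1, r))
    rw [Equiv.apply_symm_apply] at h
    exact h.2
  have hq01 : (e bot).1 ≠ (e top).1 := by
    intro h
    obtain ⟨a, b, hab⟩ := hQ.exists_pair_ne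
    exact hab (le_antisymm ((hq1 a).trans (h ▸ hq0 b)) ((hq1 b).trans (h ▸ hq0 a)))
  have hr01 : (e bot).2 ≠ (e top).2 := by
    intro h
    obtain ⟨a, b, hab⟩ := hR.exists_pair_ne
    exact hab (le_antisymm ((hr1 a).trans (h ▸ hr0 b)) ((hr1 b).trans (h ▸ hr0 a)))
  set u : ↥(PkSet k) := e.symm ((e top).1, (e bot).2) with hudef
  set v : ↥(PkSet k) := e.symm ((e bot).1, (e top).2) with hvdef
  have heu : e u = ((e top).1, (e bot).2) := Equiv.apply_symm_apply _ _
  have hev : e v = ((e bot).1, (e top).2) := Equiv.apply_symm_apply _ _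
  have hu_ne : u.1 ≠ twoF ∅ 1 := by
    intro h
    have : u = bot := Subtype.ext h
    apply hq01
    have := congrArg e this
    rw [heu] at this
    exact (congrArg Prod.fst this).symm
  have hv_ne : v.1 ≠ twoF ∅ 1 := by
    intro h
    have : v = bot := Subtype.ext h
    apply hr01
    have := congrArg e this
    rw [hev] at this
    exact (congrArg Prod.snd this).symm
  obtain ⟨i, ε, hε0, hε1, hYu⟩ := exists_Y_le u hu_ne
  obtain ⟨j, δ, hδ0, hδ1, hYv⟩ := exists_Y_le v hv_ne
  have hεmem : twoF {i} ε ∈ PkSet k := twoF_mem _ hε0.le (by linarith)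
  have hδmem : twoF {j} δ ∈ PkSet k := twoF_mem _ hδ0.le (by linarith)
  set yi : ↥(PkSet k) := ⟨twoF {i} ε, hεmem⟩ with hyidef
  set yj : ↥(PkSet k) := ⟨twoF {j} δ, hδmem⟩ with hyjdef
  have hYu' : PkLe yi u := hYu hεmem
  have hYv' : PkLe yj v := hYv hδmem
  have hui := (he yi u).mp hYu'
  rw [heu] at hui
  have hvj := (he yj v).mp hYv'
  rw [hev] at hvj
  rcases eq_or_ne i j with rfl | hij
  · -- same index: get a nonzero common lower bound of u and v
    rcases le_total ε δ with h | h
    · have hmono : PkLe yi yj := twoF_mono {i} hε0.le (by linarith) h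
      have hyv : PkLe yi v := PkLe_trans hmono hYv'
      have hvi := (he yi v).mp hyv
      rw [hev] at hvi
      have : e yi = e bot := by
        apply le_antisymm
        · exact Prod.le_def.mpr ⟨(Prod.le_def.mp hvi).1, (Prod.le_def.mp hui).2⟩
        · exact hbot yi
      have hyb : yi = bot := e.injective this
      have := congrFun (congrArg Subtype.val hyb) {i}
      simp [hyidef, hbotdef, twoF, Finset.singleton_ne_empty] at this
      linarith
    · have hmono : PkLe yj yi := twoF_mono {i} hδ0.le (by linarith) h
      have hyu : PkLe yj u := PkLe_trans hmono hYu'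
      have huj := (he yj u).mp hyu
      rw [heu] at huj
      have : e yj = e bot := by
        apply le_antisymm
        · exact Prod.le_def.mpr ⟨(Prod.le_def.mp hvj).1, (Prod.le_def.mp huj).2⟩
        · exact hbot yj
      have hyb : yj = bot := e.injective this
      have := congrFun (congrArg Subtype.val hyb) {i}
      simp [hyjdef, hbotdef, twoF, Finset.singleton_ne_empty] at this
      linarith
  · -- different indices: build the least upper bound via the product
    have hsnd : (e yi).2 = (e bot).2 :=
      le_antisymm (Prod.le_def.mp hui).2 (hr0 _)
    have hfst : (e yj).1 = (e bot).1 :=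
      le_antisymm (Prod.le_def.mp hvj).1 (hq0 _)
    set z : ↥(PkSet k) := e.symm ((e yi).1, (e yj).2) with hzdef
    have hez : e z = ((e yi).1, (e yj).2) := Equiv.apply_symm_apply _ _
    have hz1 : PkLe yi z := by
      apply (he yi z).mpr
      rw [hez]
      exact Prod.le_def.mpr ⟨le_rfl, hsnd ▸ hr0 _⟩
    have hz2 : PkLe yj z := by
      apply (he yj z).mpr
      rw [hez]
      exact Prod.le_def.mpr ⟨hfst ▸ hq0 _, le_rfl⟩
    have hzmin : ∀ w, PkLe yi w → PkLe yj w → PkLe z w := by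
      intro w hw1 hw2
      apply (he z w).mpr
      rw [hez]
      exact Prod.le_def.mpr ⟨(Prod.le_def.mp ((he yi w).mp hw1)).1,
        (Prod.le_def.mp ((he yj w).mp hw2)).2⟩
    exact no_lub hij hε0 hε1 hδ0 hδ1 yi yj z rfl rfl hz1 hz2 hzmin
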